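/- With f, N, y(T) = Σ_{j≥1} a_jT^j and characteristic exponents B₀, B₁, …, B_G as in the setup, the set { ord_T( y(ωT) − y(ω′T) ) : ω, ω′ distinct complex N-th roots of unity } is equal to the set {B₁, …, B_G}, where ord_T denotes the T-adic order in ℂ[[T]]. -/

import Mathlib

noncomputable section

/-- The substitution `X ↦ T ^ n` on formal power series, described coefficientwise:
the coefficient of `T ^ j` in `substPow n σ` is the coefficient of `X ^ (j / n)` in `σ`
when `n ∣ j`, and `0` otherwise. -/
def substPow (n : ℕ) (σ : PowerSeries ℂ) : PowerSeries ℂ :=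
  PowerSeries.mk fun j => if n ∣ j then PowerSeries.coeff (j / n) σ else 0

/-- The power series `φ (T ^ n, w (T))`, for `φ ∈ ℂ[[X]][Y]` and `w ∈ ℂ[[T]]`. -/
def evalCurve (n : ℕ) (w : PowerSeries ℂ) (φ : Polynomial (PowerSeries ℂ)) :
    PowerSeries ℂ :=
  ∑ i ∈ Finset.range (φ.natDegree + 1), substPow n (φ.coeff i) * w ^ i

/-- `X = T ^ n`, `Y = w (T)` is a primitive Newton–Puiseux parameterization of the curve
defined by `q ∈ ℂ[[X]][Y]`: one has `q (T ^ n, w (T)) = 0`, `w` has zero constant term, and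
`gcd ({n} ∪ {j : coeff j w ≠ 0}) = 1`. -/
def IsNPParam (q : Polynomial (PowerSeries ℂ)) (n : ℕ) (w : PowerSeries ℂ) : Prop :=
  evalCurve n w q = 0 ∧ PowerSeries.constantCoeff w = 0 ∧
    ∀ d : ℕ, d ∣ n → (∀ j, PowerSeries.coeff j w ≠ 0 → d ∣ j) → d = 1

/-- `B 0, B 1, …, B G` is the characteristic sequence of the primitive Newton–Puiseux
parameterization `X = T ^ n`, `Y = w (T)`:  `B 0 = n`; for `1 ≤ i ≤ G`, `B i` is the least
exponent `j` of a nonzero term of `w` such that `gcd (B 0, …, B (i-1)) ∤ j`; and `G` is the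
least index for which `gcd (B 0, …, B G) = 1`. -/
def IsCharSeq (n : ℕ) (w : PowerSeries ℂ) (G : ℕ) (B : ℕ → ℕ) : Prop :=
  B 0 = n ∧
    (∀ i, 1 ≤ i → i ≤ G →
      B i = sInf {j : ℕ | PowerSeries.coeff j w ≠ 0 ∧ ¬ (Finset.range i).gcd B ∣ j}) ∧
    (Finset.range (G + 1)).gcd B = 1 ∧ ∀ i < G, (Finset.range (i + 1)).gcd B ≠ 1

/-- `Ebar B i = gcd (B 0, …, B i)`, the sequence of greatest common divisors. -/
def Ebar (B : ℕ → ℕ) (i : ℕ) : ℕ := (Finset.range (i + 1)).gcd B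

/-- The generators of the semigroup:
`B̄ 0 = B 0` and `B̄ i = B i + Σ_{k=1}^{i-1} ((E (k-1) - E k) / E (i-1)) * B k` for `i ≥ 1`. -/
def Bbar (B : ℕ → ℕ) (i : ℕ) : ℕ :=
  if i = 0 then B 0
  else B i + ∑ k ∈ Finset.Ico 1 i, ((Ebar B (k - 1) - Ebar B k) / Ebar B (i - 1)) * B k

/-- `B̄ i` as an extended natural number, with the convention `B̄ (G + 1) = ∞`. -/
def BbarTop (G : ℕ) (B : ℕ → ℕ) (i : ℕ) : ℕ∞ :=
  if i ≤ G then (Bbar B i : ℕ∞) else ⊤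

/-- `q` is a `k`-semiroot of the branch parameterized by `X = T ^ N`, `Y = y (T)` with
characteristic sequence `B 0, …, B G`:  `q` is monic of `Y`-degree `N / E k` and the
intersection number `(f, q)`, i.e. the `T`-adic order of `q (T ^ N, y (T))`, equals
`B̄ (k+1)` (which is `∞` for `k = G`). -/
def IsSemiroot (N : ℕ) (y : PowerSeries ℂ) (G : ℕ) (B : ℕ → ℕ) (k : ℕ)
    (q : Polynomial (PowerSeries ℂ)) : Prop :=
  q.Monic ∧ q.natDegree = N / Ebar B k ∧ (evalCurve N y q).order = BbarTop G B (k + 1)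

open PowerSeries

private lemma order_diff (ω ω' : ℂ) (y : PowerSeries ℂ) (e : ℕ)
    (h : ∀ j : ℕ, ω ^ j = ω' ^ j ↔ e ∣ j)
    (hne : {j : ℕ | PowerSeries.coeff j y ≠ 0 ∧ ¬ e ∣ j}.Nonempty) :
    (PowerSeries.rescale ω y - PowerSeries.rescale ω' y).order
      = ((sInf {j : ℕ | PowerSeries.coeff j y ≠ 0 ∧ ¬ e ∣ j} : ℕ) : ℕ∞) := by
  set S := {j : ℕ | PowerSeries.coeff j y ≠ 0 ∧ ¬ e ∣ j} with hS
  have hmem : sInf S ∈ S := Nat.sInf_mem hne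
  have hco : ∀ j : ℕ, PowerSeries.coeff j (PowerSeries.rescale ω y - PowerSeries.rescale ω' y)
      = (ω ^ j - ω' ^ j) * PowerSeries.coeff j y := by
    intro j
    simp [PowerSeries.coeff_rescale, sub_mul]
  rw [PowerSeries.order_eq_nat]
  constructor
  · rw [hco]
    refine mul_ne_zero ?_ hmem.1
    intro hz
    exact hmem.2 ((h _).mp (sub_eq_zero.mp hz))
  · intro i hi
    rw [hco]
    by_cases hei : e ∣ i
    · have : ω ^ i = ω' ^ i := (h i).mpr hei
      rw [this, sub_self, zero_mul]
    · by_cases hci : PowerSeries.coeff i y = 0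
      · rw [hci, mul_zero]
      · have : sInf S ≤ i := Nat.sInf_le (show i ∈ S from ⟨hci, hei⟩)
        omega

private lemma key (N G : ℕ) (B : ℕ → ℕ) (y : PowerSeries ℂ)
    (hprim : ∀ d : ℕ, d ∣ N → (∀ j, PowerSeries.coeff j y ≠ 0 → d ∣ j) → d = 1)
    (hB0 : B 0 = N)
    (hBi : ∀ i, 1 ≤ i → i ≤ G →
      B i = sInf {j : ℕ | PowerSeries.coeff j y ≠ 0 ∧ ¬ (Finset.range i).gcd B ∣ j})
    (hEG : (Finset.range (G + 1)).gcd B = 1)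
    (hEne : ∀ i < G, (Finset.range (i + 1)).gcd B ≠ 1)
    (d : ℕ) (hdN : d ∣ N) (hd1 : d ≠ 1) :
    ∃ i, 1 ≤ i ∧ i ≤ G ∧
      B i = sInf {j : ℕ | PowerSeries.coeff j y ≠ 0 ∧ ¬ d ∣ j} ∧
      {j : ℕ | PowerSeries.coeff j y ≠ 0 ∧ ¬ d ∣ j}.Nonempty := by
  -- nonemptiness of S d' for d' ∣ N, d' ≠ 1
  have hSne : ∀ d' : ℕ, d' ∣ N → d' ≠ 1 →
      {j : ℕ | PowerSeries.coeff j y ≠ 0 ∧ ¬ d' ∣ j}.Nonempty := by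
    intro d' hd'N hd'1
    by_contra hempty
    rw [Set.not_nonempty_iff_eq_empty, Set.eq_empty_iff_forall_notMem] at hempty
    exact hd'1 (hprim d' hd'N fun j hj =>
      by_contra fun hdvd => hempty j ⟨hj, hdvd⟩)
  -- find least i with ¬ d ∣ E i
  have hPG : ¬ d ∣ (Finset.range (G + 1)).gcd B := by
    rw [hEG]; exact fun h => hd1 (Nat.dvd_one.mp h)
  have hex : ∃ i, ¬ d ∣ (Finset.range (i + 1)).gcd B := ⟨G, hPG⟩
  set i := Nat.find hex with hidef
  have hi : ¬ d ∣ (Finset.range (i + 1)).gcd B := Nat.find_spec hex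
  have hmin : ∀ k < i, d ∣ (Finset.range (k + 1)).gcd B := by
    intro k hk
    have := Nat.find_min hex hk
    tauto
  have hiG : i ≤ G := Nat.find_min' hex hPG
  have hi1 : 1 ≤ i := by
    rcases Nat.eq_zero_or_pos i with h0 | h; swap; · exact h
    exfalso
    apply hi
    rw [h0]
    have : (Finset.range 1).gcd B = B 0 := by simp
    rw [this, hB0]; exact hdN
  have hdE : d ∣ (Finset.range i).gcd B := by
    have := hmin (i - 1) (by omega)
    rwa [Nat.sub_add_cancel hi1] at this
  -- E (i-1) = (range i).gcd B divides N and ≠ 1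
  have hE_dvd_N : (Finset.range i).gcd B ∣ N := by
    have : (Finset.range i).gcd B ∣ B 0 := Finset.gcd_dvd (Finset.mem_range.mpr (by omega))
    rwa [hB0] at this
  have hE_ne_one : (Finset.range i).gcd B ≠ 1 := by
    have := hEne (i - 1) (by omega)
    rwa [Nat.sub_add_cancel hi1] at this
  have hS1ne := hSne _ hE_dvd_N hE_ne_one
  have hBieq := hBi i hi1 hiG
  have hBmem : B i ∈ {j : ℕ | PowerSeries.coeff j y ≠ 0 ∧ ¬ (Finset.range i).gcd B ∣ j} := by
    rw [hBieq]; exact Nat.sInf_mem hS1ne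
  -- ¬ d ∣ B i
  have hdBi : ¬ d ∣ B i := by
    intro hdvd
    apply hi
    rw [Finset.range_add_one, Finset.gcd_insert]
    exact dvd_gcd hdvd hdE
  have hBmemS : B i ∈ {j : ℕ | PowerSeries.coeff j y ≠ 0 ∧ ¬ d ∣ j} := ⟨hBmem.1, hdBi⟩
  refine ⟨i, hi1, hiG, ?_, ⟨B i, hBmemS⟩⟩
  refine le_antisymm ?_ (Nat.sInf_le hBmemS)
  have hlb : ∀ j ∈ {j : ℕ | PowerSeries.coeff j y ≠ 0 ∧ ¬ d ∣ j}, B i ≤ j := by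
    intro j hj
    have : ¬ (Finset.range i).gcd B ∣ j := fun h => hj.2 (dvd_trans hdE h)
    rw [hBieq]
    exact Nat.sInf_le ⟨hj.1, this⟩
  exact le_csInf ⟨B i, hBmemS⟩ hlb

theorem stmt_7' (N G : ℕ) (B : ℕ → ℕ) (y : PowerSeries ℂ)
    (hN : 1 ≤ N)
    (hconst : PowerSeries.constantCoeff y = 0)
    (hprim : ∀ d : ℕ, d ∣ N → (∀ j, PowerSeries.coeff j y ≠ 0 → d ∣ j) → d = 1)
    (hB0 : B 0 = N)
    (hBi : ∀ i, 1 ≤ i → i ≤ G →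
      B i = sInf {j : ℕ | PowerSeries.coeff j y ≠ 0 ∧ ¬ (Finset.range i).gcd B ∣ j})
    (hEG : (Finset.range (G + 1)).gcd B = 1)
    (hEne : ∀ i < G, (Finset.range (i + 1)).gcd B ≠ 1) :
    {d : ℕ | ∃ ω ω' : ℂ, ω ^ N = 1 ∧ ω' ^ N = 1 ∧ ω ≠ ω' ∧
        (PowerSeries.rescale ω y - PowerSeries.rescale ω' y).order = (d : ℕ∞)} =
      {d : ℕ | ∃ i, 1 ≤ i ∧ i ≤ G ∧ B i = d} := by
  ext d
  simp only [Set.mem_setOf_eq]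
  constructor
  · rintro ⟨ω, ω', hωN, hω'N, hne, hord⟩
    have hω'0 : ω' ≠ 0 := by
      intro h; rw [h] at hω'N; simp [zero_pow (by omega : N ≠ 0)] at hω'N
    set ζ := ω * ω'⁻¹ with hζ
    have hζN : ζ ^ N = 1 := by
      rw [hζ, mul_pow, inv_pow, hωN, hω'N, inv_one, mul_one]
    have heN : orderOf ζ ∣ N := orderOf_dvd_of_pow_eq_one hζN
    have he1 : orderOf ζ ≠ 1 := fun h => by
      have h2 := orderOf_eq_one_iff.mp h
      rw [hζ] at h2
      field_simp at h2
      exact hne h2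
    have hcond : ∀ j : ℕ, ω ^ j = ω' ^ j ↔ orderOf ζ ∣ j := by
      intro j
      rw [orderOf_dvd_iff_pow_eq_one, hζ, mul_pow, inv_pow]
      constructor
      · intro h; rw [h, mul_inv_cancel₀ (pow_ne_zero _ hω'0)]
      · intro h
        field_simp at h
        exact h
    obtain ⟨i, hi1, hiG, hBieq, hSne⟩ := key N G B y hprim hB0 hBi hEG hEne (orderOf ζ) heN he1
    have := order_diff ω ω' y (orderOf ζ) hcond hSne
    rw [hord] at this
    refine ⟨i, hi1, hiG, ?_⟩
    rw [hBieq]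
    exact_mod_cast this.symm
  · rintro ⟨i, hi1, hiG, hBid⟩
    have hBii := hBi i hi1 hiG
    set D := (Finset.range i).gcd B with hD
    have hD_dvd_N : D ∣ N := by
      have : D ∣ B 0 := Finset.gcd_dvd (Finset.mem_range.mpr (by omega))
      rwa [hB0] at this
    have hD_ne_one : D ≠ 1 := by
      have := hEne (i - 1) (by omega)
      rwa [Nat.sub_add_cancel hi1] at this
    have hD0 : D ≠ 0 := fun h => by
      rw [h] at hD_dvd_N; omega
    obtain ⟨ω, hω⟩ : ∃ ω : ℂ, IsPrimitiveRoot ω D := ⟨_, Complex.isPrimitiveRoot_exp D hD0⟩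
    have hSne : {j : ℕ | PowerSeries.coeff j y ≠ 0 ∧ ¬ D ∣ j}.Nonempty := by
      by_contra hempty
      rw [Set.not_nonempty_iff_eq_empty] at hempty
      refine hD_ne_one (hprim D hD_dvd_N fun j hj => ?_)
      by_contra hdvd
      have : j ∈ ({} : Set ℕ) := by rw [← hempty]; exact ⟨hj, hdvd⟩
      exact this
    have hcond : ∀ j : ℕ, ω ^ j = (1:ℂ) ^ j ↔ D ∣ j := by
      intro j; rw [one_pow]; exact hω.pow_eq_one_iff_dvd j
    refine ⟨ω, 1, ?_, one_pow N, ?_, ?_⟩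
    · obtain ⟨c, hc⟩ := hD_dvd_N
      rw [hc, pow_mul, hω.pow_eq_one, one_pow]
    · intro h
      apply hD_ne_one
      have : D ∣ 1 := (hcond 1).mp (by rw [h])
      exact Nat.dvd_one.mp this
    · have hval : sInf {j : ℕ | PowerSeries.coeff j y ≠ 0 ∧ ¬ D ∣ j} = d := by
        rw [← hBii]; exact hBid
      rw [order_diff ω 1 y D hcond hSne]
      exact_mod_cast hval

/-- **The characteristic exponents as orders of differences of conjugate parameterizations.**
With `f` an irreducible monic polynomial in `ℂ[[X]][Y]` of degree `N ≥ 1`, with primitive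
Newton–Puiseux parameterization `X = T ^ N`, `Y = y (T)` and characteristic exponents
`B 0, …, B G`, the set of `T`-adic orders `ord_T (y (ω T) - y (ω' T))`, for `ω ≠ ω'`
complex `N`-th roots of unity, equals `{B 1, …, B G}`. -/
theorem stmt_7 (f : Polynomial (PowerSeries ℂ)) (N G : ℕ) (B : ℕ → ℕ) (y : PowerSeries ℂ)
    (hN : 1 ≤ N) (hmonic : f.Monic) (hdeg : f.natDegree = N) (hirr : Irreducible f)
    (h00 : PowerSeries.constantCoeff (Polynomial.eval 0 f) = 0)
    (hparam : IsNPParam f N y) (hchar : IsCharSeq N y G B) :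
    {d : ℕ | ∃ ω ω' : ℂ, ω ^ N = 1 ∧ ω' ^ N = 1 ∧ ω ≠ ω' ∧
        (PowerSeries.rescale ω y - PowerSeries.rescale ω' y).order = (d : ℕ∞)} =
      {d : ℕ | ∃ i, 1 ≤ i ∧ i ≤ G ∧ B i = d} := by
  obtain ⟨_, hconst, hprim⟩ := hparam
  obtain ⟨hB0, hBi, hEG, hEne⟩ := hchar
  exact stmt_7' N G B y hN hconst hprim hB0 hBi hEG hEne
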